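/- arXiv:2210.00690 — 4 statements merged into one kernel-verified Lean document; each statement's English description precedes it below -/
import Mathlib

section
/- Let X be an integrable random vector in ℝ^d and λ > 0, and define the clipped vector X̃ = clip(X, λ) = min{1, λ/‖X‖}·X. If E[‖X‖^α] ≤ G^α for α ∈ (1,2], then ‖E[X] − E[X̃]‖ ≤ G^α λ^{1−α}. -/
open MeasureTheory Real

/-- Clipping operator: `clip x λ = min{1, λ/‖x‖} • x` (with `clip 0 λ = 0`). -/
noncomputable def clip {E : Type*} [NormedAddCommGroup E] [InnerProductSpace ℝ E]
    (x : E) (lam : ℝ) : E := (min 1 (lam / ‖x‖)) • x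

lemma norm_clip_le {E : Type*} [NormedAddCommGroup E] [InnerProductSpace ℝ E]
    (x : E) {lam : ℝ} (hlam : 0 < lam) : ‖clip x lam‖ ≤ ‖x‖ := by
  rw [clip, norm_smul]
  have h0 : 0 ≤ min 1 (lam / ‖x‖) := le_min one_pos.le (by positivity)
  have h1 : min 1 (lam / ‖x‖) ≤ 1 := min_le_left _ _
  rw [Real.norm_eq_abs, abs_of_nonneg h0]
  nlinarith [norm_nonneg x]

lemma clip_diff_le {E : Type*} [NormedAddCommGroup E] [InnerProductSpace ℝ E]
    (x : E) {α lam : ℝ} (hα1 : 1 < α) (hlam : 0 < lam) :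
    ‖x - clip x lam‖ ≤ ‖x‖ ^ α * lam ^ (1 - α) := by
  have hrpos : 0 ≤ lam ^ (1 - α) := (rpow_pos_of_pos hlam _).le
  by_cases hx : x = 0
  · simp [clip, hx]
    positivity
  have hxn : 0 < ‖x‖ := norm_pos_iff.mpr hx
  by_cases h : ‖x‖ ≤ lam
  · have hc : clip x lam = x := by
      have h1 : (1:ℝ) ≤ lam / ‖x‖ := (one_le_div hxn).mpr h
      rw [clip, min_eq_left h1, one_smul]
    rw [hc, sub_self, norm_zero]
    positivity
  · push_neg at h
    have hm : min 1 (lam / ‖x‖) = lam / ‖x‖ := min_eq_right ((div_le_one hxn).mpr h.le)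
    have hdiff : x - clip x lam = (1 - lam / ‖x‖) • x := by
      rw [clip, hm, sub_smul, one_smul]
    rw [hdiff, norm_smul]
    have hnn : 0 ≤ 1 - lam / ‖x‖ := by
      have := (div_le_one hxn).mpr h.le; linarith
    rw [Real.norm_eq_abs, abs_of_nonneg hnn]
    have key : ‖x‖ ≤ ‖x‖ ^ α * lam ^ (1 - α) := by
      have h2 : lam ^ (α - 1) ≤ ‖x‖ ^ (α - 1) :=
        rpow_le_rpow hlam.le h.le (by linarith)
      have h3 : (1:ℝ) ≤ ‖x‖ ^ (α - 1) * lam ^ (1 - α) := by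
        have hone : lam ^ (α - 1) * lam ^ (1 - α) = 1 := by
          rw [← rpow_add hlam]; norm_num
        calc (1:ℝ) = lam ^ (α - 1) * lam ^ (1 - α) := hone.symm
          _ ≤ ‖x‖ ^ (α - 1) * lam ^ (1 - α) := mul_le_mul_of_nonneg_right h2 hrpos
      have hsplit : ‖x‖ * ‖x‖ ^ (α - 1) = ‖x‖ ^ α := by
        nth_rewrite 1 [← Real.rpow_one ‖x‖]
        rw [← Real.rpow_add hxn]; ring_nf
      calc ‖x‖ = ‖x‖ * 1 := (mul_one _).symm
        _ ≤ ‖x‖ * (‖x‖ ^ (α - 1) * lam ^ (1 - α)) :=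
            mul_le_mul_of_nonneg_left h3 hxn.le
        _ = ‖x‖ ^ α * lam ^ (1 - α) := by rw [← mul_assoc, hsplit]
    have hstep : (1 - lam / ‖x‖) * ‖x‖ ≤ ‖x‖ := by
      have : 0 ≤ lam / ‖x‖ := by positivity
      nlinarith
    linarith

/-- Bias of clipping: `‖E[X] − E[clip(X,λ)]‖ ≤ G^α λ^{1-α}`. -/
theorem clipping_bias_le {d : ℕ} {Ω : Type*} [MeasurableSpace Ω]
    (μ : Measure Ω) [IsProbabilityMeasure μ]
    (X : Ω → EuclideanSpace ℝ (Fin d)) (hX : Measurable X) (hXint : Integrable X μ)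
    (α G lam : ℝ) (hα1 : 1 < α) (hα2 : α ≤ 2) (hG : 0 ≤ G) (hlam : 0 < lam)
    (hmomInt : Integrable (fun ω => ‖X ω‖ ^ α) μ)
    (hmom : ∫ ω, ‖X ω‖ ^ α ∂μ ≤ G ^ α) :
    ‖(∫ ω, X ω ∂μ) - ∫ ω, clip (X ω) lam ∂μ‖ ≤ G ^ α * lam ^ (1 - α) := by
  have hclipm : Measurable fun x : EuclideanSpace ℝ (Fin d) => clip x lam := by
    unfold clip
    exact (measurable_const.min (measurable_const.div measurable_norm)).smul measurable_id
  have hclipmeas : AEStronglyMeasurable (fun ω => clip (X ω) lam) μ :=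
    (hclipm.comp hX).aestronglyMeasurable
  have hclipint : Integrable (fun ω => clip (X ω) lam) μ :=
    hXint.mono hclipmeas (Filter.Eventually.of_forall fun ω => norm_clip_le (X ω) hlam)
  have hrpos : 0 ≤ lam ^ (1 - α) := (rpow_pos_of_pos hlam _).le
  rw [← integral_sub hXint hclipint]
  calc ‖∫ ω, (X ω - clip (X ω) lam) ∂μ‖
      ≤ ∫ ω, ‖X ω - clip (X ω) lam‖ ∂μ := norm_integral_le_integral_norm _
    _ ≤ ∫ ω, ‖X ω‖ ^ α * lam ^ (1 - α) ∂μ := by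
        apply integral_mono_of_nonneg
        · exact Filter.Eventually.of_forall fun ω => norm_nonneg _
        · exact hmomInt.mul_const _
        · exact Filter.Eventually.of_forall fun ω => clip_diff_le (X ω) hα1 hlam
    _ = (∫ ω, ‖X ω‖ ^ α ∂μ) * lam ^ (1 - α) := integral_mul_const _ _
    _ ≤ G ^ α * lam ^ (1 - α) := mul_le_mul_of_nonneg_right hmom hrpos
end

section
/- Let x, x* ∈ ℝ^d, η > 0, and let Δ̃ be a random vector with E[‖Δ̃‖²] ≤ S. Let f be μ-strongly convex with minimizer x*, and let g = ∇f(x), K > 0. Then E[‖x − ηΔ̃ − x*‖²] ≤ (1 − (μηK)/2)‖x − x*‖² + η²S + (8ηK/μ)·‖(1/K)E[Δ̃] − g‖² − 2ηK( f(x) − f(x*) ). -/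
open MeasureTheory RealInnerProductSpace

/-- One-step recursion in the strongly convex analysis of FAT-Clipping:
`E‖x − ηΔ̃ − x*‖² ≤ (1 − μηK/2)‖x − x*‖² + η²S + (8ηK/μ)‖(1/K)E[Δ̃] − ∇f(x)‖²
  − 2ηK(f(x) − f(x*))`. -/
theorem one_step_strongly_convex {d : ℕ} {Ω : Type*} [MeasurableSpace Ω]
    (μ : Measure Ω) [IsProbabilityMeasure μ]
    (f : EuclideanSpace ℝ (Fin d) → ℝ)
    (g : EuclideanSpace ℝ (Fin d) → EuclideanSpace ℝ (Fin d)) (μs : ℝ) (hμs : 0 < μs)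
    (hgrad : ∀ z, HasGradientAt f (g z) z)
    (hsc : ∀ a b, f a + ⟪g a, b - a⟫ + μs / 2 * ‖b - a‖ ^ 2 ≤ f b)
    (x xs : EuclideanSpace ℝ (Fin d)) (hmin : ∀ y, f xs ≤ f y)
    (η K S : ℝ) (hη : 0 < η) (hK : 0 < K)
    (Δ : Ω → EuclideanSpace ℝ (Fin d)) (hΔmeas : Measurable Δ)
    (hΔint : Integrable Δ μ) (hΔ2int : Integrable (fun ω => ‖Δ ω‖ ^ 2) μ)
    (hS : ∫ ω, ‖Δ ω‖ ^ 2 ∂μ ≤ S) :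
    ∫ ω, ‖x - η • Δ ω - xs‖ ^ 2 ∂μ ≤
      (1 - μs * η * K / 2) * ‖x - xs‖ ^ 2 + η ^ 2 * S
        + 8 * η * K / μs * ‖(1 / K) • (∫ ω, Δ ω ∂μ) - g x‖ ^ 2
        - 2 * η * K * (f x - f xs) := by
  set v : EuclideanSpace ℝ (Fin d) := x - xs with hv
  set m : EuclideanSpace ℝ (Fin d) := ∫ ω, Δ ω ∂μ with hm
  set b : EuclideanSpace ℝ (Fin d) := (1 / K) • m - g x with hb
  -- pointwise expansion
  have hpt : ∀ ω, ‖x - η • Δ ω - xs‖ ^ 2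
      = ‖v‖ ^ 2 - 2 * (η * ⟪v, Δ ω⟫) + η ^ 2 * ‖Δ ω‖ ^ 2 := by
    intro ω
    have h1 : x - η • Δ ω - xs = v - η • Δ ω := by
      simp [hv]; abel
    rw [h1, norm_sub_sq_real, real_inner_smul_right, norm_smul]
    simp only [mul_pow, sq_abs, Real.norm_eq_abs]
    try ring
  have hint1 : Integrable (fun ω => ⟪v, Δ ω⟫) μ := hΔint.const_inner v
  have hIeq : ∫ ω, ‖x - η • Δ ω - xs‖ ^ 2 ∂μ
      = ‖v‖ ^ 2 - 2 * (η * ⟪v, m⟫) + η ^ 2 * (∫ ω, ‖Δ ω‖ ^ 2 ∂μ) := by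
    simp_rw [hpt]
    rw [integral_add, integral_sub (integrable_const _) ((hint1.const_mul η).const_mul 2),
      integral_const, integral_const_mul, integral_const_mul, integral_const_mul,
      integral_inner hΔint]
    · simp [hm]
    · exact (integrable_const _).sub ((hint1.const_mul η).const_mul 2)
    · exact hΔ2int.const_mul _
  rw [hIeq]
  -- decompose mean
  have hvm : ⟪v, m⟫ = K * ⟪v, g x⟫ + K * ⟪v, b⟫ := by
    rw [hb, inner_sub_right, real_inner_smul_right]
    field_simp
    ring
  -- strong convexity
  have hsc' : -⟪v, g x⟫ ≤ f xs - f x - μs / 2 * ‖v‖ ^ 2 := by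
    have hthis := hsc x xs
    have hxs : xs - x = -(x - xs) := by abel
    rw [hxs, inner_neg_right, real_inner_comm, norm_neg] at hthis
    linarith
  -- Young
  have hyoung : -(2 * ⟪v, b⟫) ≤ μs / 4 * ‖v‖ ^ 2 + 4 / μs * ‖b‖ ^ 2 := by
    have h1 : -⟪v, b⟫ ≤ ‖v‖ * ‖b‖ := by
      have := abs_real_inner_le_norm v b
      have := abs_le.mp this
      linarith [this.1]
    have ht : μs * (‖b‖ ^ 2 / μs) = ‖b‖ ^ 2 := by field_simp
    have h3 : 2 * (‖v‖ * ‖b‖) ≤ μs / 4 * ‖v‖ ^ 2 + 4 / μs * ‖b‖ ^ 2 := by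
      have h2 : 0 ≤ (μs * ‖v‖ - 4 * ‖b‖) ^ 2 := sq_nonneg _
      have h4 : 4 / μs * ‖b‖ ^ 2 = 4 * (‖b‖ ^ 2 / μs) := by ring
      rw [h4]
      nlinarith [h2, ht, hμs]
    linarith
  rw [hvm]
  have hη2 : η ^ 2 * (∫ ω, ‖Δ ω‖ ^ 2 ∂μ) ≤ η ^ 2 * S := by
    apply mul_le_mul_of_nonneg_left hS (by positivity)
  have h4 : η * K * (-⟪v, g x⟫) ≤ η * K * (f xs - f x - μs / 2 * ‖v‖ ^ 2) :=
    mul_le_mul_of_nonneg_left hsc' (by positivity)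
  have h5 : η * K * (-(2 * ⟪v, b⟫)) ≤ η * K * (μs / 4 * ‖v‖ ^ 2 + 4 / μs * ‖b‖ ^ 2) :=
    mul_le_mul_of_nonneg_left hyoung (by positivity)
  have h6 : η * K * (4 / μs * ‖b‖ ^ 2) ≤ 8 * η * K / μs * ‖b‖ ^ 2 := by
    rw [← sub_nonneg]
    have heq : 8 * η * K / μs * ‖b‖ ^ 2 - η * K * (4 / μs * ‖b‖ ^ 2)
        = 4 * η * K * ‖b‖ ^ 2 / μs := by ring
    rw [heq]; positivity
  have h7 : 0 ≤ μs * η * K / 4 * ‖v‖ ^ 2 := by positivity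
  linarith [h4, h5, h6, hη2, h7]
end

section
/- Let f : ℝ^d → ℝ be differentiable with L-Lipschitz gradient, let x ∈ ℝ^d, and let Δ̃ be a random vector in ℝ^d. Let c > 0 satisfy cL ≤ 1 with c = ηK for step size η > 0 and K ≥ 1 (i.e. ηKL ≤ 1). Then for x⁺ = x − ηΔ̃: E[f(x⁺)] − f(x) ≤ −(ηK/2)‖∇f(x)‖² + (ηK/2)‖∇f(x) − (1/K)E[Δ̃]‖² + (Lη²/2)·E[‖Δ̃ − E[Δ̃]‖²]. -/
open MeasureTheory RealInnerProductSpace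

section aux
variable {E : Type*} [NormedAddCommGroup E] [InnerProductSpace ℝ E] [CompleteSpace E]

/-- Descent lemma from Lipschitz gradient. -/
lemma descent_lemma (f : E → ℝ) (g : E → E) (L : ℝ) (hL : 0 ≤ L)
    (hgrad : ∀ z, HasGradientAt f (g z) z)
    (hlip : ∀ a b, ‖g a - g b‖ ≤ L * ‖a - b‖) (x y : E) :
    f y ≤ f x + ⟪g x, y - x⟫ + L / 2 * ‖y - x‖ ^ 2 := by
  set v := y - x with hv
  set ψ : ℝ → ℝ := fun t => f (x + t • v) - t * ⟪g x, v⟫ - L * ‖v‖ ^ 2 * t ^ 2 / 2 with hψ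
  have hderiv : ∀ t : ℝ, HasDerivAt ψ
      (⟪g (x + t • v), v⟫ - ⟪g x, v⟫ - L * ‖v‖ ^ 2 * t) t := by
    intro t
    have hc : HasDerivAt (fun t : ℝ => x + t • v) v t := by
      simpa using ((hasDerivAt_id t).smul_const v).const_add x
    have hfc : HasDerivAt (fun t : ℝ => f (x + t • v)) ⟪g (x + t • v), v⟫ t := by
      have := ((hgrad (x + t • v)).hasFDerivAt.comp_hasDerivAt t hc)
      simp at this; exact this
    have h2 : HasDerivAt (fun t : ℝ => t * ⟪g x, v⟫) ⟪g x, v⟫ t := by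
      simpa using (hasDerivAt_id t).mul_const ⟪g x, v⟫
    have h3 : HasDerivAt (fun t : ℝ => L * ‖v‖ ^ 2 * t ^ 2 / 2) (L * ‖v‖ ^ 2 * t) t := by
      have := ((hasDerivAt_pow 2 t).const_mul (L * ‖v‖ ^ 2)).div_const 2
      refine this.congr_deriv ?_
      simp only [Nat.cast_ofNat, show (2:ℕ) - 1 = 1 from rfl, pow_one]
      ring
    have := (hfc.sub h2).sub h3
    exact this
  have hanti : AntitoneOn ψ (Set.Icc 0 1) := by
    apply antitoneOn_of_deriv_nonpos (convex_Icc 0 1)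
    · exact Continuous.continuousOn (by
        exact continuous_iff_continuousAt.2 fun t => (hderiv t).continuousAt)
    · intro t ht
      exact (hderiv t).differentiableAt.differentiableWithinAt
    · intro t ht
      rw [interior_Icc] at ht
      rw [(hderiv t).deriv]
      have h1 : ⟪g (x + t • v) - g x, v⟫ ≤ L * t * ‖v‖ ^ 2 := by
        calc ⟪g (x + t • v) - g x, v⟫ ≤ ‖g (x + t • v) - g x‖ * ‖v‖ :=
              real_inner_le_norm _ _
          _ ≤ (L * ‖(x + t • v) - x‖) * ‖v‖ := by
              apply mul_le_mul_of_nonneg_right (hlip _ _) (norm_nonneg _)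
          _ = L * t * ‖v‖ ^ 2 := by
              simp [norm_smul, abs_of_pos ht.1]; ring
      have := inner_sub_left (𝕜 := ℝ) (g (x + t • v)) (g x) v
      nlinarith [this, ht.1.le]
  have := hanti (Set.left_mem_Icc.2 zero_le_one) (Set.right_mem_Icc.2 zero_le_one) zero_le_one
  simp only [hψ] at this
  simp only [zero_smul, add_zero, one_smul] at this
  have hxy : x + v = y := by rw [hv]; abel
  rw [hxy] at this
  nlinarith [this]

end aux

/-- One-round descent inequality in the nonconvex analysis of FAT-Clipping:
for `x⁺ = x − ηΔ̃` with `ηKL ≤ 1`,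
`E[f(x⁺)] − f(x) ≤ −(ηK/2)‖∇f(x)‖² + (ηK/2)‖∇f(x) − (1/K)E[Δ̃]‖²
  + (Lη²/2)E‖Δ̃ − E[Δ̃]‖²`. -/
theorem one_round_descent_nonconvex {d : ℕ} {Ω : Type*} [MeasurableSpace Ω]
    (μ : Measure Ω) [IsProbabilityMeasure μ]
    (f : EuclideanSpace ℝ (Fin d) → ℝ)
    (g : EuclideanSpace ℝ (Fin d) → EuclideanSpace ℝ (Fin d)) (L : ℝ) (hL : 0 ≤ L)
    (hgrad : ∀ z, HasGradientAt f (g z) z)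
    (hlip : ∀ a b, ‖g a - g b‖ ≤ L * ‖a - b‖)
    (x : EuclideanSpace ℝ (Fin d)) (η K : ℝ) (hη : 0 < η) (hK : 1 ≤ K)
    (hηKL : η * K * L ≤ 1)
    (Δ : Ω → EuclideanSpace ℝ (Fin d)) (hΔmeas : Measurable Δ)
    (hΔint : Integrable Δ μ) (hΔ2int : Integrable (fun ω => ‖Δ ω‖ ^ 2) μ)
    (hfint : Integrable (fun ω => f (x - η • Δ ω)) μ) :
    (∫ ω, f (x - η • Δ ω) ∂μ) - f x ≤
      -(η * K / 2) * ‖g x‖ ^ 2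
        + η * K / 2 * ‖g x - (1 / K) • (∫ ω, Δ ω ∂μ)‖ ^ 2
        + L * η ^ 2 / 2 * ∫ ω, ‖Δ ω - ∫ ω', Δ ω' ∂μ‖ ^ 2 ∂μ := by
  set m : EuclideanSpace ℝ (Fin d) := ∫ ω, Δ ω ∂μ with hm
  have hK0 : (0:ℝ) < K := lt_of_lt_of_le one_pos hK
  -- pointwise descent bound
  have hpt : ∀ ω, f (x - η • Δ ω) ≤
      f x - η * ⟪g x, Δ ω⟫ + L * η ^ 2 / 2 * ‖Δ ω‖ ^ 2 := by
    intro ω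
    have := descent_lemma f g L hL hgrad hlip x (x - η • Δ ω)
    have h1 : (x - η • Δ ω) - x = -(η • Δ ω) := by abel
    rw [h1] at this
    have h2 : ⟪g x, -(η • Δ ω)⟫ = -(η * ⟪g x, Δ ω⟫) := by
      rw [inner_neg_right, real_inner_smul_right]
    have h3 : ‖-(η • Δ ω)‖ ^ 2 = η ^ 2 * ‖Δ ω‖ ^ 2 := by
      rw [norm_neg, norm_smul]
      simp [abs_of_pos hη, mul_pow]
    rw [h2, h3] at this
    linarith
  -- integrability pieces
  have hinner_int : Integrable (fun ω => ⟪g x, Δ ω⟫) μ := hΔint.const_inner _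
  have hRHSint : Integrable (fun ω => f x - η * ⟪g x, Δ ω⟫ + L * η ^ 2 / 2 * ‖Δ ω‖ ^ 2) μ :=
    ((integrable_const (f x)).sub (hinner_int.const_mul η)).add (hΔ2int.const_mul _)
  have hint_le : (∫ ω, f (x - η • Δ ω) ∂μ) ≤
      ∫ ω, (f x - η * ⟪g x, Δ ω⟫ + L * η ^ 2 / 2 * ‖Δ ω‖ ^ 2) ∂μ :=
    integral_mono hfint hRHSint hpt
  have hIinner : ∫ ω, ⟪g x, Δ ω⟫ ∂μ = ⟪g x, m⟫ := integral_inner hΔint _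
  have h1 : Integrable (fun ω => f x - η * ⟪g x, Δ ω⟫) μ :=
    (integrable_const (f x)).sub (hinner_int.const_mul η)
  have hIrhs : ∫ ω, (f x - η * ⟪g x, Δ ω⟫ + L * η ^ 2 / 2 * ‖Δ ω‖ ^ 2) ∂μ =
      f x - η * ⟪g x, m⟫ + L * η ^ 2 / 2 * ∫ ω, ‖Δ ω‖ ^ 2 ∂μ := by
    rw [integral_add h1 (hΔ2int.const_mul _),
      integral_sub (integrable_const (f x)) (hinner_int.const_mul η),
      integral_const, integral_const_mul, integral_const_mul, hIinner]
    simp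
  -- variance decomposition
  have hvar : ∫ ω, ‖Δ ω - m‖ ^ 2 ∂μ = (∫ ω, ‖Δ ω‖ ^ 2 ∂μ) - ‖m‖ ^ 2 := by
    have hexp : ∀ ω, ‖Δ ω - m‖ ^ 2 = ‖Δ ω‖ ^ 2 - 2 * ⟪Δ ω, m⟫ + ‖m‖ ^ 2 := fun ω =>
      norm_sub_sq_real _ _
    have h2 : Integrable (fun ω => ‖Δ ω‖ ^ 2 - 2 * ⟪Δ ω, m⟫) μ :=
      hΔ2int.sub ((hΔint.inner_const m).const_mul 2)
    rw [integral_congr_ae (Filter.Eventually.of_forall hexp)]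
    rw [integral_add h2 (integrable_const _),
      integral_sub hΔ2int ((hΔint.inner_const m).const_mul 2),
      integral_const, integral_const_mul]
    have h3 : ∫ ω, ⟪Δ ω, m⟫ ∂μ = ⟪m, m⟫ := by
      have h4 : ∀ ω, ⟪Δ ω, m⟫ = ⟪m, Δ ω⟫ := fun ω => real_inner_comm _ _
      rw [integral_congr_ae (Filter.Eventually.of_forall h4), integral_inner hΔint]
    rw [h3, real_inner_self_eq_norm_sq]
    simp
    ring
  -- final algebra
  have hnorm1 : ‖g x - (1 / K) • m‖ ^ 2 =
      ‖g x‖ ^ 2 - 2 * ((1/K) * ⟪g x, m⟫) + (1/K)^2 * ‖m‖ ^ 2 := by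
    rw [norm_sub_sq_real, real_inner_smul_right, norm_smul]
    simp [abs_of_pos (by positivity : (0:ℝ) < 1/K), mul_pow]
  have hI2 : ∫ ω, ‖Δ ω‖ ^ 2 ∂μ = ‖m‖ ^ 2 + ∫ ω, ‖Δ ω - m‖ ^ 2 ∂μ := by
    rw [hvar]; ring
  have hcoef : L * η ^ 2 / 2 * ‖m‖ ^ 2 ≤ η / (2 * K) * ‖m‖ ^ 2 := by
    apply mul_le_mul_of_nonneg_right _ (sq_nonneg _)
    rw [div_le_div_iff₀ two_pos (by positivity)]
    nlinarith
  have hexpand : η * K / 2 * ‖g x - (1 / K) • m‖ ^ 2 =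
      η * K / 2 * ‖g x‖ ^ 2 - η * ⟪g x, m⟫ + η / (2 * K) * ‖m‖ ^ 2 := by
    rw [hnorm1]; field_simp
  rw [hIrhs, hI2] at hint_le
  linarith [hint_le, hcoef, hexpand]
end

section
/- Let α ∈ (1, 2] and let X̃ = clip(X, λ) for a random vector X with E[‖X‖^α] ≤ G^α. Then ‖E[X̃] − E[X]‖² ≤ G^{2α} λ^{2−2α}. -/
open MeasureTheory Real

lemma clip_norm_le {E : Type*} [NormedAddCommGroup E] [InnerProductSpace ℝ E]
    (x : E) (lam : ℝ) (hlam : 0 < lam) : ‖clip x lam‖ ≤ ‖x‖ := by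
  rw [clip, norm_smul]
  have h0 : 0 ≤ lam / ‖x‖ := div_nonneg hlam.le (norm_nonneg x)
  have : |min 1 (lam / ‖x‖)| ≤ 1 := by
    rw [abs_of_nonneg (le_min zero_le_one h0)]
    exact min_le_left _ _
  calc |min 1 (lam / ‖x‖)| * ‖x‖ ≤ 1 * ‖x‖ := by
        exact mul_le_mul_of_nonneg_right this (norm_nonneg x)
    _ = ‖x‖ := one_mul _

lemma clip_dist_le {E : Type*} [NormedAddCommGroup E] [InnerProductSpace ℝ E]
    (x : E) (α lam : ℝ) (hα1 : 1 < α) (hlam : 0 < lam) :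
    ‖clip x lam - x‖ ≤ lam ^ (1 - α) * ‖x‖ ^ α := by
  rcases le_or_gt ‖x‖ lam with h | h
  · rcases eq_or_ne x 0 with rfl | hx
    · simp [clip]
      positivity
    · have hx' : 0 < ‖x‖ := norm_pos_iff.mpr hx
      have : min 1 (lam / ‖x‖) = 1 := min_eq_left ((one_le_div hx').mpr h)
      rw [clip, this, one_smul, sub_self, norm_zero]
      positivity
  · have hx' : 0 < ‖x‖ := hlam.trans h
    have hmin : min 1 (lam / ‖x‖) = lam / ‖x‖ :=
      min_eq_right ((div_le_one hx').mpr h.le)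
    have hstep : ‖clip x lam - x‖ ≤ ‖x‖ := by
      rw [clip, hmin]
      have : (lam / ‖x‖) • x - x = (lam / ‖x‖ - 1) • x := by
        rw [sub_smul, one_smul]
      rw [this, norm_smul]
      have h1 : |lam / ‖x‖ - 1| ≤ 1 := by
        rw [abs_le]
        constructor
        · nlinarith [div_nonneg hlam.le hx'.le]
        · nlinarith [(div_le_one hx').mpr h.le]
      calc |lam / ‖x‖ - 1| * ‖x‖ ≤ 1 * ‖x‖ :=
            mul_le_mul_of_nonneg_right h1 (norm_nonneg x)
        _ = ‖x‖ := one_mul _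
    refine hstep.trans ?_
    have key : ‖x‖ = ‖x‖ ^ (1 - α) * ‖x‖ ^ α := by
      rw [← Real.rpow_add hx', sub_add_cancel, Real.rpow_one]
    calc ‖x‖ = ‖x‖ ^ (1 - α) * ‖x‖ ^ α := key
      _ ≤ lam ^ (1 - α) * ‖x‖ ^ α :=
          mul_le_mul_of_nonneg_right
            (Real.rpow_le_rpow_of_nonpos hlam h.le (by linarith))
            (Real.rpow_nonneg (norm_nonneg x) α)

/-- Squared bias of clipping under a bounded α-moment:
`‖E[clip(X,λ)] − E[X]‖² ≤ G^{2α} λ^{2−2α}`. -/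
theorem clipping_bias_sq_le {d : ℕ} {Ω : Type*} [MeasurableSpace Ω]
    (μ : Measure Ω) [IsProbabilityMeasure μ]
    (X : Ω → EuclideanSpace ℝ (Fin d)) (hX : Measurable X) (hXint : Integrable X μ)
    (α G lam : ℝ) (hα1 : 1 < α) (hα2 : α ≤ 2) (hG : 0 ≤ G) (hlam : 0 < lam)
    (hmomInt : Integrable (fun ω => ‖X ω‖ ^ α) μ)
    (hmom : ∫ ω, ‖X ω‖ ^ α ∂μ ≤ G ^ α) :
    ‖(∫ ω, clip (X ω) lam ∂μ) - ∫ ω, X ω ∂μ‖ ^ 2 ≤ G ^ (2 * α) * lam ^ (2 - 2 * α) := by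
  have hclipmeas : Measurable fun ω => clip (X ω) lam := by
    unfold clip
    fun_prop
  have hclipInt : Integrable (fun ω => clip (X ω) lam) μ :=
    hXint.mono hclipmeas.aestronglyMeasurable
      (Filter.Eventually.of_forall fun ω => clip_norm_le _ _ hlam)
  have hsubInt : Integrable (fun ω => clip (X ω) lam - X ω) μ := hclipInt.sub hXint
  have hbias : ‖(∫ ω, clip (X ω) lam ∂μ) - ∫ ω, X ω ∂μ‖ ≤ G ^ α * lam ^ (1 - α) := by
    rw [← integral_sub hclipInt hXint]
    calc ‖∫ ω, (clip (X ω) lam - X ω) ∂μ‖ ≤ ∫ ω, ‖clip (X ω) lam - X ω‖ ∂μ :=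
          norm_integral_le_integral_norm _
      _ ≤ ∫ ω, lam ^ (1 - α) * ‖X ω‖ ^ α ∂μ := by
          apply integral_mono hsubInt.norm (hmomInt.const_mul _)
          exact fun ω => clip_dist_le _ _ _ hα1 hlam
      _ = lam ^ (1 - α) * ∫ ω, ‖X ω‖ ^ α ∂μ := integral_const_mul _ _
      _ ≤ lam ^ (1 - α) * G ^ α :=
          mul_le_mul_of_nonneg_left hmom (Real.rpow_nonneg hlam.le _)
      _ = G ^ α * lam ^ (1 - α) := mul_comm _ _
  calc ‖(∫ ω, clip (X ω) lam ∂μ) - ∫ ω, X ω ∂μ‖ ^ 2 ≤ (G ^ α * lam ^ (1 - α)) ^ 2 :=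
        pow_le_pow_left₀ (norm_nonneg _) hbias 2
    _ = G ^ (2 * α) * lam ^ (2 - 2 * α) := by
        rw [mul_pow, ← Real.rpow_natCast (G ^ α) 2, ← Real.rpow_natCast (lam ^ (1 - α)) 2,
          ← Real.rpow_mul hG, ← Real.rpow_mul hlam.le]
        norm_num
        ring_nf
end
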